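/- Let Q₁, Q₂ be computable probability measures on Ω and let P = p₁Q₁ + p₂Q₂ with computable rationals 0 < p₁, p₂, p₁ + p₂ = 1. Then R^P = R^{Q₁} ∪ R^{Q₂}, i.e., a sequence is ML-random for the mixture iff it is ML-random for at least one component. -/

import Mathlib

open MeasureTheory Filter Set

abbrev BSeq : Type := ℕ → Bool
abbrev Str := List Bool

/-- Cylinder set of a finite binary string. -/
def cyl (s : Str) : Set BSeq := {x | ∀ i, i < s.length → x i = s.getD i false}

/-- The length-`n` prefix of an infinite sequence, as a finite string. -/
def prefixOf (y : BSeq) (n : ℕ) : Str := (List.range n).map y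

/-- Conditional probability on the first coordinate given the cylinder `Δ(s)`
on the second coordinate. -/
noncomputable def condCyl (P : Measure (BSeq × BSeq)) (s : Str) : Measure BSeq :=
  (P (Set.univ ×ˢ cyl s))⁻¹ • ((P.restrict (Set.univ ×ˢ cyl s)).map Prod.fst)

/-- The `n`-th open set of a test. -/
def openOf (U : Set (Str × ℕ)) (n : ℕ) : Set BSeq := ⋃ s ∈ {s | (s, n) ∈ U}, cyl s

/-- Martin-Löf test for a measure on `BSeq`. -/
def MLTest (μ : Measure BSeq) (U : Set (Str × ℕ)) : Prop :=
  REPred (· ∈ U) ∧ (∀ n, openOf U (n + 1) ⊆ openOf U n) ∧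
    ∀ n, μ (openOf U n) < (2⁻¹ : ENNReal) ^ n

/-- Martin-Löf randomness for a measure on `BSeq`. -/
def MLRandom (μ : Measure BSeq) (x : BSeq) : Prop :=
  ∀ U, MLTest μ U → ∃ n, x ∉ openOf U n

def open2 (U : Set (Str × Str × ℕ)) (n : ℕ) : Set (BSeq × BSeq) :=
  ⋃ p ∈ {p : Str × Str | (p.1, p.2, n) ∈ U}, cyl p.1 ×ˢ cyl p.2

/-- Martin-Löf test on the product space. -/
def MLTest2 (P : Measure (BSeq × BSeq)) (U : Set (Str × Str × ℕ)) : Prop :=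
  REPred (· ∈ U) ∧ (∀ n, open2 U (n + 1) ⊆ open2 U n) ∧
    ∀ n, P (open2 U n) < (2⁻¹ : ENNReal) ^ n

/-- Martin-Löf randomness on the product space. -/
def MLRandom2 (P : Measure (BSeq × BSeq)) (z : BSeq × BSeq) : Prop :=
  ∀ U, MLTest2 P U → ∃ n, z ∉ open2 U n

/-- `U` is recursively enumerable with oracle `y`. -/
def REIn (y : BSeq) (U : Set (Str × ℕ)) : Prop :=
  ∃ V : Set (Str × ℕ × Str), REPred (· ∈ V) ∧
    ∀ s n, (s, n) ∈ U ↔ ∃ m, (s, n, prefixOf y m) ∈ V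

/-- Martin-Löf test relative to oracle `y`. -/
def MLTestO (μ : Measure BSeq) (y : BSeq) (U : Set (Str × ℕ)) : Prop :=
  REIn y U ∧ (∀ n, openOf U (n + 1) ⊆ openOf U n) ∧
    ∀ n, μ (openOf U n) < (2⁻¹ : ENNReal) ^ n

/-- Martin-Löf randomness relative to oracle `y`. -/
def MLRandomO (μ : Measure BSeq) (y : BSeq) (x : BSeq) : Prop :=
  ∀ U, MLTestO μ y U → ∃ n, x ∉ openOf U n

/-- Computability of a probability measure on `BSeq`. -/
def ComputableMeasure (μ : Measure BSeq) : Prop :=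
  ∃ A : Str × ℕ → ℚ, Computable A ∧
    ∀ s k, |(μ (cyl s)).toReal - (A (s, k) : ℝ)| < 1 / (k + 1)

/-- Computability of a probability measure on the product space. -/
def ComputableMeasure2 (P : Measure (BSeq × BSeq)) : Prop :=
  ∃ A : Str × Str × ℕ → ℚ, Computable A ∧
    ∀ s t k, |(P (cyl s ×ˢ cyl t)).toReal - (A (s, t, k) : ℝ)| < 1 / (k + 1)

/-- Computability of a measure with oracle `y`: a machine reading finitely many
bits of `y` produces arbitrarily good rational approximations. -/
def OracleComputableMeasure (μ : Measure BSeq) (y : BSeq) : Prop :=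
  ∃ A : Str × ℕ × Str → Option ℚ, Computable A ∧
    ∀ s k, (∃ m, (A (s, k, prefixOf y m)).isSome) ∧
      ∀ m q, A (s, k, prefixOf y m) = some q →
        |(μ (cyl s)).toReal - (q : ℝ)| < 1 / (k + 1)

/-- `Q` is the conditional probability `P(·∣y∞)`, i.e. the limit of the
conditional probabilities along finite prefixes of `y∞`. -/
def CondAt (P : Measure (BSeq × BSeq)) (y : BSeq) (Q : Measure BSeq) : Prop :=
  IsProbabilityMeasure Q ∧
    ∀ s, Tendsto (fun n => condCyl P (prefixOf y n) (cyl s)) atTop (nhds (Q (cyl s)))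



section Aux

open Nat.Partrec.Code


theorem rePred_comp {α β} [Primcodable α] [Primcodable β] {p : β → Prop} (hp : REPred p)
    {f : α → β} (hf : Computable f) : REPred fun a => p (f a) :=
  Partrec.comp hp hf

theorem rePred_and {α} [Primcodable α] {p q : α → Prop} (hp : REPred p) (hq : REPred q) :
    REPred fun a => p a ∧ q a := by
  have h2 : Partrec₂ fun (a : α) (_ : Unit) => Part.assert (q a) fun _ => Part.some () :=
    Partrec.comp hq Computable.fst
  have h := Partrec.bind (f := fun a => Part.assert (p a) fun _ => Part.some ()) hp h2
  refine h.of_eq fun a => Part.ext fun x => ?_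
  simp only [Part.mem_bind_iff, Part.mem_assert_iff, Part.mem_some_iff]
  tauto

theorem rePred_exists {α β} [Primcodable α] [Primcodable β] {p : α × β → Prop}
    (hp : REPred p) : REPred fun a => ∃ b, p (a, b) := by
  obtain ⟨c, hc⟩ := exists_code.1 hp
  have hev : ∀ (a : α) (b : β),
      (eval c (Encodable.encode ((a, b) : α × β))).Dom ↔ p (a, b) := by
    intro a b
    rw [hc]
    simp [Encodable.encodek, Part.assert]
  set F : α → ℕ → Option ℕ := fun a m =>
    (Encodable.decode (α := β) m.unpair.2).bind fun b =>
      evaln m.unpair.1 c (Encodable.encode (a, b)) with hF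
  have hFc : Computable₂ F := by
    have h1 : Primrec fun x : α × ℕ => (Encodable.decode (α := β) x.2.unpair.2) :=
      Primrec.decode.comp ((Primrec.snd.comp (Primrec.unpair.comp Primrec.snd)))
    have h2 : Primrec₂ fun (x : α × ℕ) (b : β) =>
        evaln x.2.unpair.1 c (Encodable.encode (x.1, b)) :=
      primrec_evaln.comp
        ((((Primrec.fst.comp (Primrec.unpair.comp (Primrec.snd.comp Primrec.fst))).pair
          (Primrec.const c))).pair
          (Primrec.encode.comp ((Primrec.fst.comp Primrec.fst).pair Primrec.snd)))
    exact (Primrec.option_bind h1 h2).to_comp.to₂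
  have hg : Partrec fun a => Nat.rfindOpt (F a) := Partrec.rfindOpt hFc
  refine hg.dom_re.of_eq fun a => ?_
  rw [Nat.rfindOpt_dom]
  constructor
  · rintro ⟨m, x, hx⟩
    simp only [hF, Option.mem_def, Option.bind_eq_some_iff] at hx
    obtain ⟨b, hb, hev'⟩ := hx
    exact ⟨b, (hev a b).1 (Part.dom_iff_mem.2 ⟨x, evaln_sound hev'⟩)⟩
  · rintro ⟨b, hb⟩
    obtain ⟨x, hx⟩ := Part.dom_iff_mem.1 ((hev a b).2 hb)
    obtain ⟨k, hk⟩ := evaln_complete.1 hx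
    refine ⟨Nat.pair k (Encodable.encode b), x, ?_⟩
    simpa [hF, Nat.unpair_pair, Encodable.encodek] using hk
theorem primrec_take : Primrec₂ (fun (l : Str) (n : ℕ) => l.take n) := by
  have h : Primrec fun p : Str × ℕ =>
      (List.range (min p.2 p.1.length)).map fun j => p.1.getD j false := by
    apply Primrec.list_map
      (Primrec.list_range.comp (Primrec.nat_min.comp Primrec.snd
        (Primrec.list_length.comp Primrec.fst)))
    exact ((Primrec.list_getD false).comp (Primrec.fst.comp Primrec.fst) Primrec.snd).to₂
  refine h.to₂.of_eq fun l n => ?_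
  apply List.ext_getElem
  · simp [List.length_take, Nat.min_comm]
  · intro i h1 h2
    have hlen : i < l.length := by simp at h1; omega
    simp only [List.getElem_map, List.getElem_range, List.getElem_take]
    rw [List.getD_eq_getElem _ _ hlen]

theorem cyl_take (u : Str) (i : ℕ) : cyl u ⊆ cyl (u.take i) := by
  intro x hx j hj
  simp only [List.length_take, lt_min_iff] at hj
  rw [List.getD_eq_getElem _ _ (by simp [hj.1, hj.2]), List.getElem_take,
    ← List.getD_eq_getElem _ _ hj.2]
  exact hx j hj.2

theorem mem_cyl_prefixOf (y : BSeq) (L : ℕ) : y ∈ cyl (prefixOf y L) := by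
  intro i hi
  simp only [prefixOf, List.length_map, List.length_range] at hi
  rw [List.getD_eq_getElem _ _ (by simpa [prefixOf] using hi)]
  simp [prefixOf]

theorem prefixOf_take (y : BSeq) {m L : ℕ} (h : m ≤ L) :
    (prefixOf y L).take m = prefixOf y m := by
  simp [prefixOf, ← List.map_take, List.take_range, Nat.min_eq_left h]

theorem prefixOf_eq_of_mem_cyl {y : BSeq} {s : Str} (h : y ∈ cyl s) :
    prefixOf y s.length = s := by
  apply List.ext_getElem
  · simp [prefixOf]
  · intro i h1 h2
    simp only [prefixOf, List.getElem_map, List.getElem_range]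
    rw [h i h2, List.getD_eq_getElem _ _ h2]

theorem mem_openOf {U : Set (Str × ℕ)} {n : ℕ} {x : BSeq} :
    x ∈ openOf U n ↔ ∃ s, (s, n) ∈ U ∧ x ∈ cyl s := by
  simp [openOf]

/-- If `c • ν ≤ μ` (setwise) with `2⁻¹ ^ k ≤ c ≠ ⊤`, then `ν`-randomness implies
`μ`-randomness. -/
theorem mlrandom_mono {μ ν : Measure BSeq} {c : ENNReal} {k : ℕ}
    (hk : (2⁻¹ : ENNReal) ^ k ≤ c) (hct : c ≠ ⊤)
    (hle : ∀ A : Set BSeq, c * ν A ≤ μ A) {x : BSeq}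
    (hx : MLRandom ν x) : MLRandom μ x := by
  have hc0 : c ≠ 0 := by
    intro h; rw [h] at hk
    exact (pow_ne_zero k (by simp : (2⁻¹ : ENNReal) ≠ 0)) (le_antisymm hk zero_le)
  intro U hU
  by_contra h
  push_neg at h
  set V : Set (Str × ℕ) := {q | (q.1, k + q.2) ∈ U} with hV
  have hopen : ∀ n, openOf V n = openOf U (k + n) := fun n => rfl
  have hTest : MLTest ν V := by
    refine ⟨?_, ?_, ?_⟩
    · have hf : Computable fun q : Str × ℕ => ((q.1, k + q.2) : Str × ℕ) :=
        (Primrec.fst.pair ((Primrec.nat_add.comp (Primrec.const k) Primrec.snd))).to_comp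
      exact rePred_comp hU.1 hf
    · intro n
      rw [hopen, hopen]
      exact hU.2.1 (k + n)
    · intro n
      rw [hopen]
      have h1 : c * ν (openOf U (k + n)) ≤ μ (openOf U (k + n)) := hle _
      have h2 : μ (openOf U (k + n)) < (2⁻¹ : ENNReal) ^ (k + n) := hU.2.2 (k + n)
      have h3 : (2⁻¹ : ENNReal) ^ (k + n) ≤ c * (2⁻¹ : ENNReal) ^ n := by
        rw [pow_add]
        exact mul_le_mul_left hk _
      have h4 : c * ν (openOf U (k + n)) < c * (2⁻¹ : ENNReal) ^ n :=
        lt_of_le_of_lt h1 (lt_of_lt_of_le h2 h3)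
      exact (ENNReal.mul_lt_mul_iff_right hc0 hct).1 h4
  obtain ⟨n, hn⟩ := hx V hTest
  exact hn (by rw [hopen]; exact h (k + n))

end Aux

/-- randomness for a finite Bayesian mixture of two computable
probability measures. -/
theorem random_mixture_of_two
    (Q₁ Q₂ : Measure BSeq) [IsProbabilityMeasure Q₁] [IsProbabilityMeasure Q₂]
    (hQ₁ : ComputableMeasure Q₁) (hQ₂ : ComputableMeasure Q₂)
    (p₁ p₂ : ℚ) (hp₁ : 0 < p₁) (hp₂ : 0 < p₂) (hsum : p₁ + p₂ = 1) :
    ∀ x : BSeq,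
      MLRandom (ENNReal.ofReal (p₁ : ℝ) • Q₁ + ENNReal.ofReal (p₂ : ℝ) • Q₂) x ↔
        MLRandom Q₁ x ∨ MLRandom Q₂ x := by
  intro x
  set c₁ := ENNReal.ofReal (p₁ : ℝ) with hc₁
  set c₂ := ENNReal.ofReal (p₂ : ℝ) with hc₂
  have hc₁0 : c₁ ≠ 0 := (ENNReal.ofReal_pos.2 (by exact_mod_cast hp₁)).ne'
  have hc₂0 : c₂ ≠ 0 := (ENNReal.ofReal_pos.2 (by exact_mod_cast hp₂)).ne'
  have hc₁t : c₁ ≠ ⊤ := ENNReal.ofReal_ne_top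
  have hc₂t : c₂ ≠ ⊤ := ENNReal.ofReal_ne_top
  have hsum' : c₁ + c₂ = 1 := by
    rw [hc₁, hc₂, ← ENNReal.ofReal_add (by positivity) (by positivity)]
    rw [show ((p₁ : ℝ) + (p₂ : ℝ)) = 1 by exact_mod_cast hsum, ENNReal.ofReal_one]
  have hPapp : ∀ A : Set BSeq,
      (c₁ • Q₁ + c₂ • Q₂) A = c₁ * Q₁ A + c₂ * Q₂ A := fun A => by
    simp [Measure.add_apply, Measure.smul_apply, smul_eq_mul]
  constructor
  · -- mixture-random implies random for a component
    intro hPx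
    by_contra hnot
    push_neg at hnot
    obtain ⟨h1, h2⟩ := hnot
    unfold MLRandom at h1 h2
    push_neg at h1 h2
    obtain ⟨U, hU, hxU⟩ := h1
    obtain ⟨W, hW, hxW⟩ := h2
    set Z : Set (Str × ℕ) := {q | ∃ m : ℕ,
      (q.1.take m.unpair.1, q.2 + 1) ∈ U ∧ (q.1.take m.unpair.2, q.2 + 1) ∈ W} with hZ
    have hZopen : ∀ n, openOf Z n = openOf U (n + 1) ∩ openOf W (n + 1) := by
      intro n
      ext y
      simp only [Set.mem_inter_iff, mem_openOf]
      constructor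
      · rintro ⟨u, ⟨m, hm1, hm2⟩, hyu⟩
        exact ⟨⟨_, hm1, cyl_take u _ hyu⟩, ⟨_, hm2, cyl_take u _ hyu⟩⟩
      · rintro ⟨⟨s, hs, hys⟩, ⟨t, ht, hyt⟩⟩
        refine ⟨prefixOf y (max s.length t.length),
          ⟨Nat.pair s.length t.length, ?_, ?_⟩, mem_cyl_prefixOf y _⟩
        · rw [Nat.unpair_pair]
          rw [prefixOf_take y (le_max_left _ _), prefixOf_eq_of_mem_cyl hys]
          exact hs
        · rw [Nat.unpair_pair]
          rw [prefixOf_take y (le_max_right _ _), prefixOf_eq_of_mem_cyl hyt]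
          exact ht
    have hTest : MLTest (c₁ • Q₁ + c₂ • Q₂) Z := by
      refine ⟨?_, ?_, ?_⟩
      · have hf1 : Computable fun y : (Str × ℕ) × ℕ =>
            ((y.1.1.take y.2.unpair.1, y.1.2 + 1) : Str × ℕ) :=
          ((primrec_take.comp (Primrec.fst.comp Primrec.fst)
              (Primrec.fst.comp (Primrec.unpair.comp Primrec.snd))).pair
            (Primrec.nat_add.comp (Primrec.snd.comp Primrec.fst)
              (Primrec.const 1))).to_comp
        have hf2 : Computable fun y : (Str × ℕ) × ℕ =>
            ((y.1.1.take y.2.unpair.2, y.1.2 + 1) : Str × ℕ) :=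
          ((primrec_take.comp (Primrec.fst.comp Primrec.fst)
              (Primrec.snd.comp (Primrec.unpair.comp Primrec.snd))).pair
            (Primrec.nat_add.comp (Primrec.snd.comp Primrec.fst)
              (Primrec.const 1))).to_comp
        exact rePred_exists (rePred_and (rePred_comp hU.1 hf1) (rePred_comp hW.1 hf2))
      · intro n
        rw [hZopen, hZopen]
        exact Set.inter_subset_inter (hU.2.1 (n + 1)) (hW.2.1 (n + 1))
      · intro n
        have key : (c₁ • Q₁ + c₂ • Q₂) (openOf Z n) ≤ (2⁻¹ : ENNReal) ^ (n + 1) := by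
          rw [hZopen, hPapp]
          calc c₁ * Q₁ (openOf U (n + 1) ∩ openOf W (n + 1)) +
                c₂ * Q₂ (openOf U (n + 1) ∩ openOf W (n + 1))
              ≤ c₁ * Q₁ (openOf U (n + 1)) + c₂ * Q₂ (openOf W (n + 1)) :=
                add_le_add (mul_le_mul_right (measure_mono Set.inter_subset_left) _)
                  (mul_le_mul_right (measure_mono Set.inter_subset_right) _)
            _ ≤ c₁ * (2⁻¹ : ENNReal) ^ (n + 1) + c₂ * (2⁻¹ : ENNReal) ^ (n + 1) :=
                add_le_add (mul_le_mul_right (hU.2.2 (n + 1)).le _)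
                  (mul_le_mul_right (hW.2.2 (n + 1)).le _)
            _ = (2⁻¹ : ENNReal) ^ (n + 1) := by rw [← add_mul, hsum', one_mul]
        refine lt_of_le_of_lt key ?_
        rw [pow_succ]
        calc (2⁻¹ : ENNReal) ^ n * 2⁻¹ < (2⁻¹ : ENNReal) ^ n * 1 := by
              rw [ENNReal.mul_lt_mul_iff_right (pow_ne_zero n (by simp))
                (ENNReal.pow_ne_top (by simp))]
              exact ENNReal.inv_lt_one.2 (by norm_num)
          _ = (2⁻¹ : ENNReal) ^ n := mul_one _
    obtain ⟨n, hn⟩ := hPx Z hTest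
    exact hn (by rw [hZopen]; exact ⟨hxU (n + 1), hxW (n + 1)⟩)
  · -- component-random implies mixture-random
    rintro (hx | hx)
    · obtain ⟨k, hk⟩ := ENNReal.exists_inv_two_pow_lt hc₁0
      exact mlrandom_mono hk.le hc₁t
        (fun A => by rw [hPapp]; exact le_self_add) hx
    · obtain ⟨k, hk⟩ := ENNReal.exists_inv_two_pow_lt hc₂0
      exact mlrandom_mono hk.le hc₂t
        (fun A => by rw [hPapp]; exact le_add_self) hx
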